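/- Let E and Ẽ be the periodic Zeckendorf collections for positive integers determined by lists L = (e_1,…,e_N) and L̃ = (ẽ_1,…,ẽ_M) respectively (N, M ≥ 2, e_1 ≥ 1, ẽ_1 ≥ 1). Then E ⊆ Ẽ if and only if, for every n ≥ 2, the maximal L-block θ^n at index n−1 belongs to Ẽ. -/

import Mathlib

open Filter Topology

namespace Zeck

-- A coefficient function is `μ : ℕ → ℕ`; index `0` is unused (members vanish there).

/-- The maximal L-block `θ^n` at index `n-1`, for `L = (e 1, …, e N)`. -/
def maxBlock (N : ℕ) (e : ℕ → ℕ) (n : ℕ) : ℕ → ℕ :=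
  fun k => if 1 ≤ k ∧ k < n then e ((n - k - 1) % N + 1) else 0

/-- A proper L-block at index `n-1` with support interval `[a, n-1]`. -/
def IsProperBlock (N : ℕ) (e : ℕ → ℕ) (ζ : ℕ → ℕ) (a n : ℕ) : Prop :=
  2 ≤ n ∧ 1 ≤ a ∧ a ≤ n - 1 ∧ (∀ j, a < j → ζ j = maxBlock N e n j) ∧
    ζ a < maxBlock N e n a ∧ (∀ j, j < a → ζ j = 0)

/-- An L-block (proper or maximal), together with its support interval. -/
def IsBlock (N : ℕ) (e : ℕ → ℕ) (ζ : ℕ → ℕ) (I : Finset ℕ) : Prop :=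
  ∃ n, 2 ≤ n ∧ ((ζ = maxBlock N e n ∧ I = Finset.Icc 1 (n - 1)) ∨
    (∃ a, IsProperBlock N e ζ a n ∧ I = Finset.Icc a (n - 1)))

/-- Membership in the periodic Zeckendorf collection for positive integers determined by L:
finite sums of L-blocks with pairwise disjoint support intervals (the zero function has `l = 0`). -/
def memColl (N : ℕ) (e : ℕ → ℕ) (μ : ℕ → ℕ) : Prop :=
  ∃ (l : ℕ) (ζ : ℕ → ℕ → ℕ) (I : ℕ → Finset ℕ),
    (∀ i, i < l → IsBlock N e (ζ i) (I i)) ∧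
    (∀ i j, i < l → j < l → i ≠ j → Disjoint (I i) (I j)) ∧
    ∀ k, μ k = ∑ i ∈ Finset.range l, ζ i k

/-- The maximal L*-block `β̄^n` at index `n`. -/
def maxStarBlock (N : ℕ) (e : ℕ → ℕ) (n : ℕ) : ℕ → ℕ :=
  fun k => if n ≤ k then e ((k - n) % N + 1) else 0

/-- A proper L*-block at index `n` with support interval `[n, b]`. -/
def IsProperStarBlock (N : ℕ) (e : ℕ → ℕ) (ζ : ℕ → ℕ) (n b : ℕ) : Prop :=
  1 ≤ n ∧ n ≤ b ∧ (∀ j, j < b → ζ j = maxStarBlock N e n j) ∧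
    ζ b < maxStarBlock N e n b ∧ (∀ j, b < j → ζ j = 0)

/-- Membership in the periodic Zeckendorf collection for `(0,1)` determined by L:
nonzero finite or infinite sums of proper L*-blocks with pairwise disjoint support intervals. -/
def memStar (N : ℕ) (e : ℕ → ℕ) (ε : ℕ → ℕ) : Prop :=
  ε ≠ 0 ∧ ∃ (l : ℕ∞) (ζ : ℕ → ℕ → ℕ) (nb : ℕ → ℕ × ℕ),
    (∀ i : ℕ, (i : ℕ∞) < l → IsProperStarBlock N e (ζ i) (nb i).1 (nb i).2) ∧
    (∀ i j : ℕ, (i : ℕ∞) < l → (j : ℕ∞) < l → i ≠ j →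
      Disjoint (Finset.Icc (nb i).1 (nb i).2) (Finset.Icc (nb j).1 (nb j).2)) ∧
    ∀ k, ε k = ∑' i : ℕ, if (i : ℕ∞) < l then ζ i k else 0

/-- A decomposition `ε = ζ^1 + … + ζ^l + μ` in which the `ζ^i` are proper L*-blocks whose
support intervals partition `[1, b]` and `μ` vanishes on `[0, b]` (`l, b` possibly infinite). -/
def DecompData (N : ℕ) (e : ℕ → ℕ) (ε : ℕ → ℕ) (l : ℕ∞) (ζ : ℕ → ℕ → ℕ)
    (nb : ℕ → ℕ × ℕ) (b : ℕ∞) (μ : ℕ → ℕ) : Prop :=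
  (∀ i : ℕ, (i : ℕ∞) < l → IsProperStarBlock N e (ζ i) (nb i).1 (nb i).2) ∧
  (∀ i j : ℕ, (i : ℕ∞) < l → (j : ℕ∞) < l → i ≠ j →
    Disjoint (Set.Icc (nb i).1 (nb i).2) (Set.Icc (nb j).1 (nb j).2)) ∧
  (⋃ i ∈ {i : ℕ | (i : ℕ∞) < l}, Set.Icc (nb i).1 (nb i).2) = {k : ℕ | 1 ≤ k ∧ (k : ℕ∞) ≤ b} ∧
  (∀ k : ℕ, (k : ℕ∞) ≤ b → μ k = 0) ∧
  (∀ k, ε k = (∑' i : ℕ, if (i : ℕ∞) < l then ζ i k else 0) + μ k)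

/-- Membership in `E̅*`. -/
def memEBar (N : ℕ) (e : ℕ → ℕ) (ε : ℕ → ℕ) : Prop :=
  memStar N e ε ∨
  ∃ (l : ℕ) (ζ : ℕ → ℕ → ℕ) (nb : ℕ → ℕ × ℕ) (b : ℕ),
    DecompData N e ε (l : ℕ∞) ζ nb (b : ℕ∞) (maxStarBlock N e (b + 1))

/-- Descending lexicographic order. -/
def dLT (a b : ℕ → ℕ) : Prop := ∃ k, a k < b k ∧ ∀ j, j < k → a j = b j

def dLE (a b : ℕ → ℕ) : Prop := a = b ∨ dLT a b

/-- Ascending lexicographic order (on finitely supported functions). -/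
def aLT (a b : ℕ → ℕ) : Prop := ∃ k, a k < b k ∧ ∀ j, k < j → a j = b j

/-- The basis coefficient function `β^b`. -/
def betaUnit (b : ℕ) : ℕ → ℕ := fun k => if k = b then 1 else 0

/-- The relation `η = rev̄(ε)`. -/
def RevBar (N : ℕ) (e : ℕ → ℕ) (ε η : ℕ → ℕ) : Prop :=
  (dLE (maxStarBlock N e 1) ε ∧ η = maxStarBlock N e 1) ∨
  (dLT ε (maxStarBlock N e 1) ∧
    ((memStar N e ε ∧ η = ε) ∨
     ∃ (l : ℕ) (ζ : ℕ → ℕ → ℕ) (nb : ℕ → ℕ × ℕ) (b : ℕ) (μ : ℕ → ℕ),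
       DecompData N e ε (l : ℕ∞) ζ nb (b : ℕ∞) μ ∧
       ((dLT (maxStarBlock N e (b + 1)) μ ∧
           η = fun k => (∑ i ∈ Finset.range l, ζ i k) + betaUnit b k) ∨
        (μ = maxStarBlock N e (b + 1) ∧ η = ε))))

/-- `Σ_k ε_k w^k` as a real number. -/
noncomputable def evalReal (ε : ℕ → ℕ) (w : ℝ) : ℝ := ∑' k : ℕ, (ε k : ℝ) * w ^ k

/-- `Σ_k ε_k H_k` (finitely supported `ε`). -/
noncomputable def evalNat (ε H : ℕ → ℕ) : ℕ := ∑' k : ℕ, ε k * H k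

/-- The counting function `z`. -/
noncomputable def zfun (N : ℕ) (e : ℕ → ℕ) (Ht : ℕ → ℕ) (x : ℕ) : ℕ :=
  Set.ncard {m : ℕ | m < x ∧ ∃ ε, memColl N e ε ∧ m = evalNat ε Ht}

/-- Characteristic polynomial of `L` for positive integers. -/
noncomputable def fchar (N : ℕ) (e : ℕ → ℕ) (x : ℝ) : ℝ :=
  x ^ N - (∑ k ∈ Finset.Ico 1 N, (e k : ℝ) * x ^ (N - k)) - (1 + (e N : ℝ))

/-- Characteristic polynomial of `L` for `(0,1)`. -/
noncomputable def gchar (N : ℕ) (e : ℕ → ℕ) (x : ℝ) : ℝ :=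
  -1 + (∑ k ∈ Finset.Ico 1 N, (e k : ℝ) * x ^ k) + (1 + (e N : ℝ)) * x ^ N

end Zeck

namespace Zeck

/-- Top-down recursive characterization of membership. -/
inductive Good (N : ℕ) (e : ℕ → ℕ) : (ℕ → ℕ) → Prop
  | zero (μ : ℕ → ℕ) (h : ∀ k, μ k = 0) : Good N e μ
  | max (μ : ℕ → ℕ) (n : ℕ) (hn : 2 ≤ n) (h : ∀ k, μ k = maxBlock N e n k) : Good N e μ
  | step (μ ρ : ℕ → ℕ) (a n : ℕ) (hn : 2 ≤ n) (ha : 1 ≤ a) (han : a ≤ n - 1)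
      (hρ : Good N e ρ) (hρ0 : ∀ j, a ≤ j → ρ j = 0)
      (hlt : μ a < maxBlock N e n a)
      (h1 : ∀ j, a < j → μ j = maxBlock N e n j)
      (h3 : ∀ j, j < a → μ j = ρ j) : Good N e μ

lemma maxBlock_top {N n : ℕ} (e : ℕ → ℕ) (hn : 2 ≤ n) : maxBlock N e n (n - 1) = e 1 := by
  have h0 : n - (n - 1) - 1 = 0 := by omega
  simp only [maxBlock, h0, Nat.zero_mod]
  rw [if_pos (by omega)]

lemma maxBlock_zero {N n k : ℕ} (e : ℕ → ℕ) (hk : ¬(1 ≤ k ∧ k < n)) :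
    maxBlock N e n k = 0 := by simp only [maxBlock, if_neg hk]

lemma lt_maxBlock_bounds {N n a c : ℕ} {e : ℕ → ℕ} (h : c < maxBlock N e n a) :
    1 ≤ a ∧ a < n := by
  by_contra hc
  rw [maxBlock_zero e hc] at h; omega

lemma sup_Icc_id {a b : ℕ} (h : a ≤ b) : (Finset.Icc a b).sup id = b := by
  apply le_antisymm
  · exact Finset.sup_le fun x hx => (Finset.mem_Icc.mp hx).2
  · exact Finset.le_sup (f := id) (Finset.mem_Icc.mpr ⟨h, le_rfl⟩)

lemma isBlock_interval {N : ℕ} {e : ℕ → ℕ} {ζ : ℕ → ℕ} {I : Finset ℕ}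
    (h : IsBlock N e ζ I) : ∃ lo hi, 1 ≤ lo ∧ lo ≤ hi ∧ I = Finset.Icc lo hi := by
  obtain ⟨n, hn, h | ⟨a, hp, hI⟩⟩ := h
  · exact ⟨1, n - 1, le_rfl, by omega, h.2⟩
  · exact ⟨a, n - 1, hp.2.1, hp.2.2.1, hI⟩

lemma isBlock_vanish {N : ℕ} {e : ℕ → ℕ} {ζ : ℕ → ℕ} {I : Finset ℕ}
    (h : IsBlock N e ζ I) : ∀ k, k ∉ I → ζ k = 0 := by
  intro k hk
  obtain ⟨n, hn, ⟨hζ, hI⟩ | ⟨a, hp, hI⟩⟩ := h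
  · subst hζ; subst hI
    refine maxBlock_zero e ?_
    intro ⟨h1, h2⟩
    exact hk (Finset.mem_Icc.mpr ⟨h1, by omega⟩)
  · subst hI
    obtain ⟨hn2, ha, han, htail, hlt, hlow⟩ := hp
    rcases lt_or_ge k a with h | h
    · exact hlow k h
    · have hk2 : n - 1 < k := by
        by_contra hc; exact hk (Finset.mem_Icc.mpr ⟨h, by omega⟩)
      rw [htail k (by omega)]
      exact maxBlock_zero e (by omega)

/-- `memColl → Good`. -/
lemma memColl_good {N : ℕ} {e : ℕ → ℕ} {μ : ℕ → ℕ} (h : memColl N e μ) : Good N e μ := by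
  obtain ⟨l, ζ, I, hb, hd, hs⟩ := h
  induction l generalizing μ ζ I with
  | zero => exact Good.zero μ (by simpa using hs)
  | succ l IH =>
    -- pick index with maximal interval top
    obtain ⟨i0, hi0, hmax⟩ := Finset.exists_max_image (Finset.range (l+1))
      (fun i => (I i).sup id) ⟨0, Finset.mem_range.mpr (by omega)⟩
    have hi0l : i0 < l + 1 := Finset.mem_range.mp hi0
    set sw := Equiv.swap i0 l with hsw
    have hswmem : ∀ i, i < l + 1 → sw i < l + 1 := by
      intro i hi
      rcases eq_or_ne i i0 with rfl | h1
      · simp [hsw, Equiv.swap_apply_left]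
      rcases eq_or_ne i l with rfl | h2
      · simp [hsw, Equiv.swap_apply_right]; omega
      · rw [hsw, Equiv.swap_apply_of_ne_of_ne h1 h2]; exact hi
    set ζ' : ℕ → ℕ → ℕ := fun i => ζ (sw i) with hζ'
    set I' : ℕ → Finset ℕ := fun i => I (sw i) with hI'
    have hb' : ∀ i, i < l + 1 → IsBlock N e (ζ' i) (I' i) := fun i hi => hb _ (hswmem i hi)
    have hd' : ∀ i j, i < l + 1 → j < l + 1 → i ≠ j → Disjoint (I' i) (I' j) := by
      intro i j hi hj hij
      exact hd _ _ (hswmem i hi) (hswmem j hj) (fun hc => hij (sw.injective hc))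
    have hswl : sw l = i0 := Equiv.swap_apply_right i0 l
    have hs' : ∀ k, μ k = (∑ i ∈ Finset.range l, ζ' i k) + ζ' l k := by
      intro k
      rw [hs k, ← Finset.sum_range_succ]
      refine Finset.sum_equiv sw ?_ ?_
      · intro i
        simp only [Finset.mem_range]
        constructor
        · intro hi; exact hswmem i hi
        · intro hi
          have := hswmem _ hi
          rwa [Equiv.swap_apply_self] at this
      · intro i _
        simp only [hζ', hsw, Equiv.swap_apply_self]
    -- tops of other intervals are below the bottom of I' l
    have hmax' : ∀ i, i < l + 1 → (I' i).sup id ≤ (I' l).sup id := by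
      intro i hi
      have h1 := hmax (sw i) (Finset.mem_range.mpr (hswmem i hi))
      simpa only [hI', hswl] using h1
    have key : ∀ (lo hi : ℕ), 1 ≤ lo → lo ≤ hi → I' l = Finset.Icc lo hi →
        ∀ i, i < l → ∀ k, lo ≤ k → ζ' i k = 0 := by
      intro lo hi hlo hlohi hIl i hil k hk
      obtain ⟨lo', hi', hlo', hlohi', hIi⟩ := isBlock_interval (hb' i (by omega))
      have htop : hi' ≤ (I' l).sup id := by
        have := hmax' i (by omega)
        rwa [hIi, sup_Icc_id hlohi'] at this
      rw [hIl, sup_Icc_id hlohi] at htop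
      have hdisj := hd' i l (by omega) (by omega) (by omega)
      have hlt : hi' < lo := by
        by_contra hc
        have h1 : hi' ∈ I' i := by rw [hIi]; exact Finset.mem_Icc.mpr ⟨hlohi', le_rfl⟩
        have h2 : hi' ∈ I' l := by rw [hIl]; exact Finset.mem_Icc.mpr ⟨by omega, htop⟩
        exact (Finset.disjoint_left.mp hdisj h1) h2
      refine isBlock_vanish (hb' i (by omega)) k ?_
      rw [hIi]; intro hc
      have := (Finset.mem_Icc.mp hc).2; omega
    obtain ⟨n, hn, ⟨hζeq, hIeq⟩ | ⟨a, hp, hIeq⟩⟩ := hb' l (by omega)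
    · -- top block is maximal: all others vanish everywhere ≥ 1, in fact everywhere
      have hz : ∀ i, i < l → ∀ k, 1 ≤ k → ζ' i k = 0 :=
        key 1 (n-1) le_rfl (by omega) hIeq
      have hz0 : ∀ i, i < l → ∀ k, ζ' i k = 0 := by
        intro i hil k
        rcases Nat.eq_zero_or_pos k with rfl | hk
        · obtain ⟨lo, hi', h1, h2, h3⟩ := isBlock_interval (hb' i (by omega))
          refine isBlock_vanish (hb' i (by omega)) 0 ?_
          rw [h3]; intro hc; have := (Finset.mem_Icc.mp hc).1; omega
        · exact hz i hil k hk
      refine Good.max μ n hn ?_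
      intro k
      rw [hs' k, hζeq,
        Finset.sum_eq_zero (fun i hi => hz0 i (Finset.mem_range.mp hi) k), zero_add]
    · obtain ⟨hn2, ha, han, htail, hlt, hlow⟩ := hp
      have hz : ∀ i, i < l → ∀ k, a ≤ k → ζ' i k = 0 := key a (n-1) ha han hIeq
      refine Good.step μ (fun k => ∑ i ∈ Finset.range l, ζ' i k) a n hn ha han ?_ ?_ ?_ ?_ ?_
      · exact IH ζ' I' (fun i hi => hb' i (by omega))
          (fun i j hi hj hij => hd' i j (by omega) (by omega) hij)
          (fun k => rfl)
      · intro j hj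
        exact Finset.sum_eq_zero fun i hi => hz i (Finset.mem_range.mp hi) j hj
      · rw [hs' a, Finset.sum_eq_zero (fun i hi => hz i (Finset.mem_range.mp hi) a le_rfl),
          zero_add]
        exact hlt
      · intro j hj
        rw [hs' j, Finset.sum_eq_zero (fun i hi => hz i (Finset.mem_range.mp hi) j (by omega)),
          zero_add]
        exact htail j hj
      · intro j hj
        rw [hs' j, hlow j hj, add_zero]

end Zeck

namespace Zeck

lemma good_bound {N : ℕ} {e : ℕ → ℕ} {μ : ℕ → ℕ} (h : Good N e μ) :
    ∃ B, ∀ j, B < j → μ j = 0 := by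
  induction h with
  | zero μ h0 => exact ⟨0, fun j _ => h0 j⟩
  | max μ n hn hμ =>
    exact ⟨n, fun j hj => by rw [hμ j]; exact maxBlock_zero e (by omega)⟩
  | step μ ρ a n hn ha han hρ hρ0 hlt h1 h3 ih =>
    refine ⟨n, fun j hj => ?_⟩
    rw [h1 j (by omega)]
    exact maxBlock_zero e (by omega)

/-- `Good → memColl`, with all intervals confined below a support bound. -/
lemma good_memColl_bdd {N : ℕ} {e : ℕ → ℕ} (he : 1 ≤ e 1) {μ : ℕ → ℕ} (h : Good N e μ) :
    ∀ B, (∀ j, B < j → μ j = 0) →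
    ∃ (l : ℕ) (ζ : ℕ → ℕ → ℕ) (I : ℕ → Finset ℕ),
      (∀ i, i < l → IsBlock N e (ζ i) (I i)) ∧
      (∀ i j, i < l → j < l → i ≠ j → Disjoint (I i) (I j)) ∧
      (∀ k, μ k = ∑ i ∈ Finset.range l, ζ i k) ∧
      (∀ i, i < l → I i ⊆ Finset.Icc 1 B) := by
  induction h with
  | zero μ h0 =>
    intro B _
    exact ⟨0, fun _ _ => 0, fun _ => ∅, by omega, by omega, fun k => by simp [h0 k], by omega⟩
  | max μ n hn hμ =>
    intro B hB
    have htop : μ (n - 1) = e 1 := by rw [hμ (n-1), maxBlock_top e hn]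
    have hBn : n - 1 ≤ B := by
      by_contra hc
      have := hB (n-1) (by omega); omega
    refine ⟨1, fun _ => maxBlock N e n, fun _ => Finset.Icc 1 (n-1), ?_, ?_, ?_, ?_⟩
    · intro i _; exact ⟨n, hn, Or.inl ⟨rfl, rfl⟩⟩
    · intro i j hi hj hij; omega
    · intro k; rw [Finset.sum_range_one]; exact hμ k
    · intro i _; exact Finset.Icc_subset_Icc le_rfl hBn
  | step μ ρ a n hn ha han hρ hρ0 hlt h1 h3 ih =>
    intro B hB
    by_cases hz : μ a = 0 ∧ a = n - 1
    · -- μ = ρ, use IH directly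
      have hμρ : ∀ k, μ k = ρ k := by
        intro k
        rcases lt_trichotomy k a with hk | hk | hk
        · exact h3 k hk
        · rw [hk, hz.1, hρ0 a le_rfl]
        · rw [h1 k hk, hρ0 k (by omega), maxBlock_zero e (by omega)]
      obtain ⟨l, ζ, I, hb, hd, hs, hsub⟩ := ih B (fun j hj => by rw [← hμρ j]; exact hB j hj)
      exact ⟨l, ζ, I, hb, hd, fun k => by rw [hμρ k]; exact hs k, hsub⟩
    · have hBn : n - 1 ≤ B := by
        by_contra hc
        rcases Nat.lt_or_ge a (n-1) with h' | h'
        · have h2 := h1 (n-1) h'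
          rw [maxBlock_top e hn] at h2
          have := hB (n-1) (by omega); omega
        · have haeq : a = n - 1 := by omega
          have hc2 : μ a ≠ 0 := fun hc2 => hz ⟨hc2, haeq⟩
          have := hB a (by omega); omega
      obtain ⟨l, ζ, I, hb, hd, hs, hsub⟩ := ih (a-1) (fun j hj => hρ0 j (by omega))
      set ζt : ℕ → ℕ := fun j => if a < j then maxBlock N e n j else if j = a then μ a else 0
        with hζt
      have hblk : IsBlock N e ζt (Finset.Icc a (n-1)) := by
        refine ⟨n, hn, Or.inr ⟨a, ⟨hn, ha, han, ?_, ?_, ?_⟩, rfl⟩⟩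
        · intro j hj; simp only [hζt, if_pos hj]
        · simpa only [hζt, if_neg (lt_irrefl a), if_pos rfl, if_true] using hlt
        · intro j hj; simp only [hζt]; rw [if_neg (by omega), if_neg (by omega)]
      set ζ2 : ℕ → ℕ → ℕ := fun i => if i < l then ζ i else ζt with hζ2
      set I2 : ℕ → Finset ℕ := fun i => if i < l then I i else Finset.Icc a (n-1) with hI2
      refine ⟨l + 1, ζ2, I2, ?_, ?_, ?_, ?_⟩
      · intro i hi
        by_cases hil : i < l
        · simpa only [hζ2, hI2, if_pos hil] using hb i hil
        · simpa only [hζ2, hI2, if_neg hil] using hblk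
      · intro i j hi hj hij
        have hdsj : ∀ i', i' < l → Disjoint (I i') (Finset.Icc a (n-1)) := by
          intro i' hi'
          refine Finset.disjoint_left.mpr fun x hx hx2 => ?_
          have := Finset.mem_Icc.mp (hsub i' hi' hx)
          have := Finset.mem_Icc.mp hx2
          omega
        by_cases hil : i < l <;> by_cases hjl : j < l
        · simpa only [hI2, if_pos hil, if_pos hjl] using hd i j hil hjl hij
        · simpa only [hI2, if_pos hil, if_neg hjl] using hdsj i hil
        · simpa only [hI2, if_neg hil, if_pos hjl] using (hdsj j hjl).symm
        · omega
      · intro k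
        rw [Finset.sum_range_succ]
        simp only [hζ2]
        rw [if_neg (lt_irrefl l)]
        have hsum : ∑ i ∈ Finset.range l, (if i < l then ζ i else ζt) k
            = ∑ i ∈ Finset.range l, ζ i k := by
          refine Finset.sum_congr rfl fun i hi => ?_
          rw [if_pos (Finset.mem_range.mp hi)]
        rw [hsum, ← hs k]
        rcases lt_trichotomy k a with hk | hk | hk
        · rw [h3 k hk]
          simp only [hζt]
          rw [if_neg (by omega), if_neg (by omega), add_zero]
        · subst hk
          simp [hζt, hρ0 k le_rfl]
        · rw [hρ0 k (by omega), h1 k hk]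
          simp only [hζt, if_pos hk, zero_add]
      · intro i hi
        by_cases hil : i < l
        · simp only [hI2]
          rw [if_pos hil]
          exact (hsub i hil).trans (Finset.Icc_subset_Icc le_rfl (by omega))
        · simp only [hI2]
          rw [if_neg hil]
          exact Finset.Icc_subset_Icc ha hBn

lemma good_memColl {N : ℕ} {e : ℕ → ℕ} (he : 1 ≤ e 1) {μ : ℕ → ℕ} (h : Good N e μ) :
    memColl N e μ := by
  obtain ⟨B, hB⟩ := good_bound h
  obtain ⟨l, ζ, I, hb, hd, hs, _⟩ := good_memColl_bdd he h B hB
  exact ⟨l, ζ, I, hb, hd, hs⟩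

end Zeck

namespace Zeck

/-- Downward closure of `Good` in descending lexicographic order. -/
lemma good_down {M : ℕ} {et : ℕ → ℕ} {σ : ℕ → ℕ} (h : Good M et σ) :
    ∀ (μ : ℕ → ℕ) (a : ℕ), 1 ≤ a → (∀ j, a < j → μ j = σ j) → μ a < σ a →
    (∃ ρ, Good M et ρ ∧ (∀ j, a ≤ j → ρ j = 0) ∧ (∀ j, j < a → μ j = ρ j)) →
    Good M et μ := by
  induction h with
  | zero σ h0 =>
    intro μ a _ _ hlt _
    rw [h0 a] at hlt; omega
  | max σ n hn hσ =>
    intro μ a ha hup hlt ⟨ρ, hρ, hρ0, hρeq⟩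
    rw [hσ a] at hlt
    have han := (lt_maxBlock_bounds hlt).2
    exact Good.step μ ρ a n hn ha (by omega) hρ hρ0 hlt
      (fun j hj => by rw [hup j hj, hσ j]) hρeq
  | step σ ρ' b m hn hb hbm hρ' hρ'0 hlt' h1' h3' ih =>
    intro μ a ha hup hlt ⟨ρ, hρ, hρ0, hρeq⟩
    rcases lt_trichotomy a b with hab | hab | hab
    · -- a < b : recurse into ρ'
      set ρ2 : ℕ → ℕ := fun j => if b ≤ j then 0 else if a < j then ρ' j
        else if j = a then μ a else ρ j with hρ2
      have hσa : σ a = ρ' a := h3' a hab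
      have hρ2good : Good M et ρ2 := by
        refine ih ρ2 a ha ?_ ?_ ⟨ρ, hρ, hρ0, ?_⟩
        · intro j hj
          simp only [hρ2]
          by_cases hjb : b ≤ j
          · rw [if_pos hjb, hρ'0 j hjb]
          · rw [if_neg hjb, if_pos hj]
        · have h2 : ρ2 a = μ a := by
            simp only [hρ2]
            rw [if_neg (by omega), if_neg (by omega)]
            simp
          rw [h2, ← hσa]; exact hlt
        · intro j hj
          simp only [hρ2]
          rw [if_neg (by omega), if_neg (by omega), if_neg (by omega)]
      refine Good.step μ ρ2 b m hn hb hbm hρ2good ?_ ?_ ?_ ?_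
      · intro j hj; simp only [hρ2]; rw [if_pos hj]
      · rw [hup b hab]; exact hlt'
      · intro j hj
        rw [hup j (by omega), h1' j hj]
      · intro j hj
        simp only [hρ2]
        rw [if_neg (by omega)]
        rcases lt_trichotomy j a with hja | hja | hja
        · rw [if_neg (by omega), if_neg (by omega)]
          exact hρeq j hja
        · rw [if_neg (by omega), if_pos hja, hja]
        · rw [if_pos hja, hup j hja, h3' j hj]
    · -- a = b
      subst hab
      refine Good.step μ ρ a m hn ha hbm hρ hρ0 (by omega) ?_ hρeq
      intro j hj
      rw [hup j hj, h1' j hj]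
    · -- a > b
      have hσa : σ a = maxBlock M et m a := h1' a hab
      rw [hσa] at hlt
      refine Good.step μ ρ a m hn ha (by have := (lt_maxBlock_bounds hlt).2; omega)
        hρ hρ0 hlt ?_ hρeq
      intro j hj
      rw [hup j hj, h1' j (by omega)]

/-- The main bridge. -/
lemma good_mono {N M : ℕ} {e et : ℕ → ℕ}
    (H : ∀ n, 2 ≤ n → Good M et (maxBlock N e n)) {μ : ℕ → ℕ} (h : Good N e μ) :
    Good M et μ := by
  induction h with
  | zero μ h0 => exact Good.zero μ h0
  | max μ n hn hμ =>
    cases H n hn with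
    | zero _ h0 => exact Good.zero μ (fun k => by rw [hμ k, h0 k])
    | max _ m hm h2 => exact Good.max μ m hm (fun k => by rw [hμ k, h2 k])
    | step _ ρ a m hm ha ham hρ hρ0 hlt h1 h3 =>
      exact Good.step μ ρ a m hm ha ham hρ hρ0 (by rw [hμ a]; exact hlt)
        (fun j hj => by rw [hμ j]; exact h1 j hj) (fun j hj => by rw [hμ j]; exact h3 j hj)
  | step μ ρ a n hn ha han hρ hρ0 hlt h1 h3 ih =>
    refine good_down (H n hn) μ a ha h1 hlt ⟨ρ, ih, hρ0, h3⟩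

lemma maxBlock_memColl {N : ℕ} (e : ℕ → ℕ) {n : ℕ} (hn : 2 ≤ n) :
    memColl N e (maxBlock N e n) :=
  ⟨1, fun _ => maxBlock N e n, fun _ => Finset.Icc 1 (n-1),
    fun i _ => ⟨n, hn, Or.inl ⟨rfl, rfl⟩⟩,
    fun i j hi hj hij => by omega,
    fun k => by rw [Finset.sum_range_one]⟩

end Zeck

open Zeck

/-- `E ⊆ Ẽ` if and only if every maximal L-block `θ^n` (`n ≥ 2`) belongs to `Ẽ`. -/
theorem subcollection_iff_maxBlocks_mem (N M : ℕ) (e et : ℕ → ℕ)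
    (hN : 2 ≤ N) (hM : 2 ≤ M) (he : 1 ≤ e 1) (het : 1 ≤ et 1) :
    ({μ | memColl N e μ} ⊆ {μ | memColl M et μ}) ↔
      (∀ n, 2 ≤ n → memColl M et (maxBlock N e n)) := by
  constructor
  · intro hsub n hn
    exact hsub (maxBlock_memColl e hn)
  · intro H μ hμ
    have H' : ∀ n, 2 ≤ n → Good M et (maxBlock N e n) :=
      fun n hn => memColl_good (H n hn)
    exact good_memColl het (good_mono H' (memColl_good hμ))
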